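/- Let t0 be a real constant, h_bl : ℝ → ℝ continuous, and let h : ℝ × ℝ → ℝ be continuously differentiable and satisfy the lamella kinematic equation ∂h/∂t + (r/(t+t0))·∂h/∂r = −(2/(t+t0))·(h(r,t) − h_bl(t)) for all (r,t) with t ∈ I, where I is an open interval on which t + t0 > 0. Let R : I → ℝ be differentiable with R(t) ≥ 0, let V_tot be a constant, and define V(t) = V_tot − 2π·∫_0^{R(t)} r·h(r,t) dr. Then V is differentiable on I with V'(t) = 2π·R(t)·[ (R(t)/(t+t0))·(h(R(t),t) − h_bl(t)) − R'(t)·h(R(t),t) ]. -/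

import Mathlib

open Real intervalIntegral MeasureTheory Filter Metric

/-- If `h(r,t)` is a `C¹` solution of the lamella kinematic PDE
`∂h/∂t + (r/(t+t0))·∂h/∂r = −(2/(t+t0))·(h − h_bl(t))` on an open interval `I` where
`t + t0 > 0`, and `R` is differentiable and nonnegative on `I`, then the rim volume
`V(t) = V_tot − 2π ∫_0^{R(t)} r·h(r,t) dr` is differentiable on `I` with
`V'(t) = 2π·R·[(R/(t+t0))·(h(R,t) − h_bl(t)) − R'·h(R,t)]`. -/
theorem rim_volume_derivative
    (t0 A B V_tot : ℝ) (h_bl : ℝ → ℝ) (hbl_cont : Continuous h_bl)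
    (hpos : ∀ t ∈ Set.Ioo A B, t + t0 > 0)
    (h : ℝ → ℝ → ℝ) (hC1 : ContDiff ℝ 1 (Function.uncurry h))
    (hPDE : ∀ r : ℝ, ∀ t ∈ Set.Ioo A B,
      deriv (fun s => h r s) t + (r / (t + t0)) * deriv (fun x => h x t) r
        = -(2 / (t + t0)) * (h r t - h_bl t))
    (R : ℝ → ℝ)
    (hR : ∀ t ∈ Set.Ioo A B, DifferentiableAt ℝ R t)
    (hRnn : ∀ t ∈ Set.Ioo A B, R t ≥ 0) :
    ∀ t ∈ Set.Ioo A B,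
      HasDerivAt (fun s : ℝ => V_tot - 2 * π * ∫ r in (0:ℝ)..R s, r * h r s)
        (2 * π * R t *
          ((R t / (t + t0)) * (h (R t) t - h_bl t) - deriv R t * h (R t) t)) t := by
  intro t htI
  have hcpos : 0 < t + t0 := hpos t htI
  have hcne : t + t0 ≠ 0 := ne_of_gt hcpos
  set rT := R t with hrT
  set R' := deriv R t with hR'def
  have hrTnn : 0 ≤ rT := hRnn t htI
  have hRt : HasDerivAt R R' t := (hR t htI).hasDerivAt
  have hcontR : ContinuousAt R t := (hR t htI).continuousAt
  -- continuity facts about h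
  have hhc : Continuous (Function.uncurry h) := hC1.continuous
  have hconth : ∀ s : ℝ, Continuous fun r : ℝ => r * h r s := fun s =>
    continuous_id.mul (hhc.comp (continuous_id.prodMk continuous_const))
  set f' := fderiv ℝ (Function.uncurry h) with hf'def
  have hf'cont : Continuous f' := hC1.continuous_fderiv one_ne_zero
  have hht : ∀ r s : ℝ, HasDerivAt (fun s' => h r s') (f' (r, s) (0, 1)) s := by
    intro r s
    have h1 : HasFDerivAt (Function.uncurry h) (f' (r, s)) (r, s) :=
      (hC1.differentiable one_ne_zero (r, s)).hasFDerivAt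
    have h2 : HasDerivAt (fun s' : ℝ => ((r, s') : ℝ × ℝ)) ((0 : ℝ), (1 : ℝ)) s :=
      (hasDerivAt_const s r).prodMk (hasDerivAt_id s)
    exact h1.comp_hasDerivAt s h2
  have hhr : ∀ r s : ℝ, HasDerivAt (fun x => h x s) (f' (r, s) (1, 0)) r := by
    intro r s
    have h1 : HasFDerivAt (Function.uncurry h) (f' (r, s)) (r, s) :=
      (hC1.differentiable one_ne_zero (r, s)).hasFDerivAt
    have h2 : HasDerivAt (fun x : ℝ => ((x, s) : ℝ × ℝ)) ((1 : ℝ), (0 : ℝ)) r :=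
      (hasDerivAt_id r).prodMk (hasDerivAt_const r s)
    exact h1.comp_hasDerivAt r h2
  have hdt : ∀ r s : ℝ, deriv (fun s' => h r s') s = f' (r, s) (0, 1) :=
    fun r s => (hht r s).deriv
  have hdr : ∀ r s : ℝ, deriv (fun x => h x s) r = f' (r, s) (1, 0) :=
    fun r s => (hhr r s).deriv
  have hcont_ht : Continuous fun p : ℝ × ℝ => f' p ((0:ℝ), (1:ℝ)) :=
    hf'cont.clm_apply continuous_const
  have hcont_hr : Continuous fun p : ℝ × ℝ => f' p ((1:ℝ), (0:ℝ)) :=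
    hf'cont.clm_apply continuous_const
  -- compact convex set and bound on the derivative
  set K : Set (ℝ × ℝ) := Set.Icc (-(rT+1)) (rT+1) ×ˢ Set.Icc (t-1) (t+1) with hKdef
  have hKc : IsCompact K := isCompact_Icc.prod isCompact_Icc
  have hKconv : Convex ℝ K := (convex_Icc _ _).prod (convex_Icc _ _)
  have hKne : ((rT, t) : ℝ × ℝ) ∈ K := by
    refine ⟨⟨by linarith, by linarith⟩, ⟨by linarith, by linarith⟩⟩
  obtain ⟨p₀, -, hp₀max⟩ := hKc.exists_isMaxOn ⟨_, hKne⟩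
    (continuous_norm.comp hf'cont).continuousOn
  set C := ‖f' p₀‖ with hCdef
  have hp₀ : ∀ p ∈ K, ‖f' p‖ ≤ C := fun p hp => hp₀max hp
  have hC0 : 0 ≤ C := norm_nonneg _
  have hbd_ht : ∀ p ∈ K, |f' p ((0:ℝ), (1:ℝ))| ≤ C := by
    intro p hp
    calc |f' p ((0:ℝ), (1:ℝ))| ≤ ‖f' p‖ * ‖(((0:ℝ), (1:ℝ)) : ℝ × ℝ)‖ := (f' p).le_opNorm _
      _ = ‖f' p‖ := by simp [Prod.norm_def]
      _ ≤ C := hp₀ p hp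
  have hlip : ∀ r s : ℝ, ((r, s) : ℝ × ℝ) ∈ K → |h r s - h r t| ≤ C * |s - t| := by
    intro r s hmem
    have hmem' : ((r, t) : ℝ × ℝ) ∈ K := ⟨hmem.1, ⟨by linarith, by linarith⟩⟩
    have hkey := Convex.norm_image_sub_le_of_norm_hasFDerivWithin_le
      (f := Function.uncurry h) (f' := f')
      (fun p _ => ((hC1.differentiable one_ne_zero p).hasFDerivAt).hasFDerivWithinAt)
      (fun p hp => hp₀ p hp) hKconv hmem' hmem
    have hnorm : ‖((r, s) : ℝ × ℝ) - ((r, t) : ℝ × ℝ)‖ = |s - t| := by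
      simp [Prod.norm_def]
    rw [hnorm] at hkey
    simpa [Function.uncurry] using hkey
  -- parametric part P
  set J := ∫ r in (0:ℝ)..rT, r * f' (r, t) ((0:ℝ), (1:ℝ)) with hJdef
  have hcontF' : Continuous fun r : ℝ => r * f' (r, t) ((0:ℝ), (1:ℝ)) :=
    continuous_id.mul (hcont_ht.comp (continuous_id.prodMk continuous_const))
  have hP : HasDerivAt (fun s : ℝ => ∫ r in (0:ℝ)..rT, r * h r s) J t := by
    refine (intervalIntegral.hasDerivAt_integral_of_dominated_loc_of_deriv_le
      (F := fun s r => r * h r s) (F' := fun s r => r * f' (r, s) ((0:ℝ), (1:ℝ)))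
      (bound := fun _ => (rT + 1) * C) (μ := volume) (a := 0) (b := rT)
      (Metric.ball_mem_nhds t one_pos) ?_ ?_ ?_ ?_ ?_ ?_).2
    · exact Filter.Eventually.of_forall fun s => ((hconth s).aestronglyMeasurable).restrict
    · exact (hconth t).intervalIntegrable _ _
    · exact hcontF'.aestronglyMeasurable.restrict
    · refine Filter.Eventually.of_forall fun r hr => fun x hx => ?_
      rw [Set.uIoc_of_le hrTnn] at hr
      have hmem : ((r, x) : ℝ × ℝ) ∈ K := by
        have h1 := hr.1; have h2 := hr.2
        have hx' : |x - t| < 1 := by simpa [Real.dist_eq] using hx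
        have hx1 := abs_sub_lt_iff.mp hx'
        exact ⟨⟨by linarith, by linarith⟩, ⟨by linarith [hx1.1, hx1.2], by linarith [hx1.1, hx1.2]⟩⟩
      have := hbd_ht _ hmem
      have h1 := hr.1; have h2 := hr.2
      rw [Real.norm_eq_abs, abs_mul]
      have : |r| ≤ rT + 1 := by rw [abs_of_pos h1]; linarith
      exact mul_le_mul this (hbd_ht _ hmem) (abs_nonneg _) (by linarith)
    · exact intervalIntegrable_const
    · exact Filter.Eventually.of_forall fun r _ => fun x _ => (hht r x).const_mul r
  -- moving-endpoint part
  have hg : HasDerivAt (fun y => ∫ r in rT..y, r * h r t) (rT * h rT t) rT :=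
    integral_hasDerivAt_right ((hconth t).intervalIntegrable _ _)
      ((hconth t).stronglyMeasurableAtFilter _ _) (hconth t).continuousAt
  have hgR : HasDerivAt (fun s => ∫ r in rT..(R s), r * h r t) (rT * h rT t * R') t :=
    HasDerivAt.comp t hg hRt
  -- error part
  set E : ℝ → ℝ := fun s => ∫ r in rT..(R s), r * (h r s - h r t) with hEdef
  have hEt : E t = 0 := by
    simp [hEdef, ← hrT]
  have hE : HasDerivAt E 0 t := by
    rw [hasDerivAt_iff_isLittleO, Asymptotics.isLittleO_iff]
    intro ε hε
    set M := (rT + 1) * C with hMdef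
    have hM0 : 0 ≤ M := by positivity
    set δ := min 1 (ε / (M + 1)) with hδdef
    have hδpos : 0 < δ := lt_min one_pos (div_pos hε (by linarith))
    have hδ1 : δ ≤ 1 := min_le_left _ _
    have hMδ : M * δ ≤ ε := by
      have h1 : δ ≤ ε / (M + 1) := min_le_right _ _
      have h2 : M * δ ≤ M * (ε / (M + 1)) := mul_le_mul_of_nonneg_left h1 hM0
      have h3 : M * (ε / (M + 1)) ≤ ε := by
        rw [mul_div_assoc']
        rw [div_le_iff₀ (by linarith)]
        nlinarith
      linarith
    have hIoo : ∀ᶠ s in nhds t, s ∈ Set.Ioo A B :=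
      Filter.eventually_iff.mpr (isOpen_Ioo.mem_nhds htI)
    have hnear : ∀ᶠ s in nhds t, |R s - rT| < δ := by
      have := Metric.tendsto_nhds.mp hcontR δ hδpos
      simpa [Real.dist_eq] using this
    have hball : ∀ᶠ s in nhds t, |s - t| < 1 :=
      Metric.eventually_nhds_iff.mpr ⟨1, one_pos, fun x hx => by simpa [Real.dist_eq] using hx⟩
    filter_upwards [hIoo, hnear, hball] with s hs1 hs2 hs3
    rw [hEt, smul_zero, sub_zero, sub_zero]
    have hRs0 : 0 ≤ R s := hRnn s hs1
    have hRs1 : R s ≤ rT + 1 := by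
      have := abs_sub_lt_iff.mp hs2
      linarith [this.1, this.2]
    have hbound : ∀ r ∈ Set.uIoc rT (R s), ‖r * (h r s - h r t)‖ ≤ (rT + 1) * (C * |s - t|) := by
      intro r hr
      rw [Set.mem_uIoc] at hr
      have hr0 : 0 < r := by rcases hr with ⟨h1, _⟩ | ⟨h1, _⟩ <;> linarith
      have hr1 : r ≤ rT + 1 := by rcases hr with ⟨_, h2⟩ | ⟨_, h2⟩ <;> linarith
      have hmem : ((r, s) : ℝ × ℝ) ∈ K := by
        have hs3' := abs_sub_lt_iff.mp hs3
        exact ⟨⟨by linarith, hr1⟩, ⟨by linarith [hs3'.1, hs3'.2], by linarith [hs3'.1, hs3'.2]⟩⟩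
      rw [Real.norm_eq_abs, abs_mul]
      exact mul_le_mul (by rw [abs_of_pos hr0]; exact hr1) (hlip r s hmem)
        (abs_nonneg _) (by linarith)
    have hEs : ‖E s‖ ≤ ((rT + 1) * (C * |s - t|)) * |R s - rT| :=
      intervalIntegral.norm_integral_le_of_norm_le_const hbound
    rw [Real.norm_eq_abs (s - t)]
    have habs : 0 ≤ |s - t| := abs_nonneg _
    have habs2 : 0 ≤ |R s - rT| := abs_nonneg _
    calc ‖E s‖ ≤ ((rT + 1) * (C * |s - t|)) * |R s - rT| := hEs
      _ = (M * |R s - rT|) * |s - t| := by rw [hMdef]; ring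
      _ ≤ (M * δ) * |s - t| := by
          apply mul_le_mul_of_nonneg_right _ habs
          exact mul_le_mul_of_nonneg_left hs2.le hM0
      _ ≤ ε * |s - t| := mul_le_mul_of_nonneg_right hMδ habs
  -- decomposition of the integral
  have hsum : ∀ s : ℝ, (∫ r in (0:ℝ)..R s, r * h r s)
      = (∫ r in (0:ℝ)..rT, r * h r s) + ((∫ r in rT..(R s), r * h r t) + E s) := by
    intro s
    have h1 : IntervalIntegrable (fun r => r * h r s) volume 0 rT :=
      (hconth s).intervalIntegrable _ _
    have h2 : IntervalIntegrable (fun r => r * h r s) volume rT (R s) :=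
      (hconth s).intervalIntegrable _ _
    have h3 : IntervalIntegrable (fun r => r * h r t) volume rT (R s) :=
      (hconth t).intervalIntegrable _ _
    have h4 : IntervalIntegrable (fun r => r * (h r s - h r t)) volume rT (R s) := by
      apply Continuous.intervalIntegrable
      exact continuous_id.mul
        (((hhc.comp (continuous_id.prodMk continuous_const))).sub
          (hhc.comp (continuous_id.prodMk continuous_const)))
    have hsplit : (∫ r in (0:ℝ)..R s, r * h r s)
        = (∫ r in (0:ℝ)..rT, r * h r s) + ∫ r in rT..(R s), r * h r s :=
      (intervalIntegral.integral_add_adjacent_intervals h1 h2).symm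
    rw [hsplit, hEdef]
    congr 1
    rw [← intervalIntegral.integral_add h3 h4]
    apply intervalIntegral.integral_congr
    intro r _
    ring
  -- value of J via the PDE and integration by parts
  have hpt : ∀ r : ℝ, r * f' (r, t) ((0:ℝ), (1:ℝ))
      = -(1/(t+t0)) * (2*r*h r t + r^2 * f' (r, t) ((1:ℝ), (0:ℝ)))
        + (2/(t+t0)) * h_bl t * r := by
    intro r
    have hp := hPDE r t htI
    rw [hdt, hdr] at hp
    have : f' (r, t) ((0:ℝ), (1:ℝ))
        = -(2/(t+t0)) * (h r t - h_bl t) - (r/(t+t0)) * f' (r, t) ((1:ℝ), (0:ℝ)) := by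
      linarith
    rw [this]
    field_simp
    ring
  have hφ : ∀ r : ℝ, HasDerivAt (fun x => x^2 * h x t)
      (2*r*h r t + r^2 * f' (r, t) ((1:ℝ), (0:ℝ))) r := by
    intro r
    have : HasDerivAt (fun x => x^2 * h x t) _ r := (hasDerivAt_pow 2 r).mul (hhr r t)
    convert this using 1
    push_cast
    ring
  have hφcont : Continuous fun r : ℝ => 2*r*h r t + r^2 * f' (r, t) ((1:ℝ), (0:ℝ)) := by
    apply Continuous.add
    · exact (continuous_const.mul continuous_id).mul
        (hhc.comp (continuous_id.prodMk continuous_const))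
    · exact (continuous_pow 2).mul (hcont_hr.comp (continuous_id.prodMk continuous_const))
  have hφint : ∫ r in (0:ℝ)..rT, (2*r*h r t + r^2 * f' (r, t) ((1:ℝ), (0:ℝ)))
      = rT^2 * h rT t := by
    rw [intervalIntegral.integral_eq_sub_of_hasDerivAt (fun r _ => hφ r)
      (hφcont.intervalIntegrable _ _)]
    simp
  have hJval : J = -(1/(t+t0)) * (rT^2 * h rT t) + (2/(t+t0)) * h_bl t * (rT^2/2) := by
    rw [hJdef, intervalIntegral.integral_congr (g := fun r =>
      -(1/(t+t0)) * (2*r*h r t + r^2 * f' (r, t) ((1:ℝ), (0:ℝ))) + (2/(t+t0)) * h_bl t * r)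
      (fun r _ => hpt r)]
    have hint1 : IntervalIntegrable
        (fun r : ℝ => -(1/(t+t0)) * (2*r*h r t + r^2 * f' (r, t) ((1:ℝ), (0:ℝ))))
        volume 0 rT := (continuous_const.mul hφcont).intervalIntegrable _ _
    have hint2 : IntervalIntegrable (fun r : ℝ => 2/(t+t0) * h_bl t * r) volume 0 rT :=
      (continuous_const.mul continuous_id').intervalIntegrable _ _
    rw [intervalIntegral.integral_add hint1 hint2]
    rw [intervalIntegral.integral_const_mul, intervalIntegral.integral_const_mul, hφint, integral_id]
    ring
  -- assemble
  have hmain : HasDerivAt (fun s : ℝ => V_tot - 2 * π * ∫ r in (0:ℝ)..R s, r * h r s)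
      (0 - 2 * π * (J + (rT * h rT t * R' + 0))) t := by
    have hfun : (fun s : ℝ => V_tot - 2 * π * ∫ r in (0:ℝ)..R s, r * h r s)
        = fun s : ℝ => V_tot - 2 * π * ((∫ r in (0:ℝ)..rT, r * h r s)
            + ((∫ r in rT..(R s), r * h r t) + E s)) := by
      funext s
      rw [hsum s]
    rw [hfun]
    exact (hasDerivAt_const t V_tot).sub ((hP.add (hgR.add hE)).const_mul (2 * π))
  convert hmain using 1
  rw [hJval]
  field_simp
  ring
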